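/- Under the hypotheses f' ≠ 0, f''' continuous, {f,x} < 0 on J and f(α) = 0 with α ∈ J, Halley's iteration x_{n+1} = x_n - f(x_n)/(f'(x_n) - f''(x_n)f(x_n)/(2f'(x_n))) converges monotonically to α for any starting value x₀ ∈ J. -/

import Mathlib

/-- The Schwarzian derivative `{f,x} = f'''/f' - (3/2)(f''/f')²`. -/
noncomputable def schwarzian (f : ℝ → ℝ) (x : ℝ) : ℝ :=
  deriv (deriv (deriv f)) x / deriv f x - (3/2) * (deriv (deriv f) x / deriv f x) ^ 2

/-- Halley's iteration function for `f`. -/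
noncomputable def halley (f : ℝ → ℝ) (x : ℝ) : ℝ :=
  x - f x / (deriv f x - deriv (deriv f) x * f x / (2 * deriv f x))

open Set Filter Real

lemma deriv_neg_fun (f : ℝ → ℝ) : deriv (fun x => -f x) = fun x => -deriv f x :=
  funext fun _ => deriv.neg

lemma deriv_reflect (f : ℝ → ℝ) : deriv (fun x => f (-x)) = fun x => -deriv f (-x) :=
  funext fun _ => deriv_comp_neg f _

lemma schwarzian_neg (f : ℝ → ℝ) : schwarzian (fun x => -f x) = schwarzian f := by
  funext x
  have h1 : deriv (fun x => -f x) = fun x => -deriv f x := deriv_neg_fun f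
  have h2 : deriv (deriv (fun x => -f x)) = fun x => -deriv (deriv f) x := by
    rw [h1]; exact deriv_neg_fun _
  have h3 : deriv (deriv (deriv (fun x => -f x))) = fun x => -deriv (deriv (deriv f)) x := by
    rw [h2]; exact deriv_neg_fun _
  unfold schwarzian
  rw [h3, h2, h1]
  beta_reduce
  rw [neg_div_neg_eq, div_neg, neg_div, neg_neg]

lemma halley_neg (f : ℝ → ℝ) : halley (fun x => -f x) = halley f := by
  funext x
  have h1 : deriv (fun x => -f x) = fun x => -deriv f x := deriv_neg_fun f
  have h2 : deriv (deriv (fun x => -f x)) = fun x => -deriv (deriv f) x := by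
    rw [h1]; exact deriv_neg_fun _
  unfold halley
  rw [h2, h1]
  beta_reduce
  have hA : -deriv f x - -deriv (deriv f) x * -f x / (2 * -deriv f x)
      = -(deriv f x - deriv (deriv f) x * f x / (2 * deriv f x)) := by ring
  rw [hA, neg_div_neg_eq]

lemma schwarzian_reflect (f : ℝ → ℝ) (x : ℝ) :
    schwarzian (fun y => f (-y)) x = schwarzian f (-x) := by
  have h1 : deriv (fun y => f (-y)) = fun y => -deriv f (-y) := deriv_reflect f
  have h2 : deriv (deriv (fun y => f (-y))) = fun y => deriv (deriv f) (-y) := by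
    rw [h1]
    funext y
    rw [show (fun y => -deriv f (-y)) = fun y => -(fun z => deriv f (-z)) y from rfl]
    rw [deriv.fun_neg, deriv_comp_neg, neg_neg]
  have h3 : deriv (deriv (deriv (fun y => f (-y)))) = fun y => -deriv (deriv (deriv f)) (-y) := by
    rw [h2]; exact deriv_reflect _
  unfold schwarzian
  rw [h3, h2, h1]
  beta_reduce
  rw [neg_div_neg_eq, div_neg, neg_sq]

lemma halley_reflect (f : ℝ → ℝ) : halley (fun y => f (-y)) = fun x => -halley f (-x) := by
  funext x
  have h1 : deriv (fun y => f (-y)) = fun y => -deriv f (-y) := deriv_reflect f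
  have h2 : deriv (deriv (fun y => f (-y))) = fun y => deriv (deriv f) (-y) := by
    rw [h1]
    funext y
    rw [show (fun y => -deriv f (-y)) = fun y => -(fun z => deriv f (-z)) y from rfl]
    rw [deriv.fun_neg, deriv_comp_neg, neg_neg]
  unfold halley
  rw [h2, h1]
  beta_reduce
  have hA : -deriv f (-x) - deriv (deriv f) (-x) * f (-x) / (2 * -deriv f (-x))
      = -(deriv f (-x) - deriv (deriv f) (-x) * f (-x) / (2 * deriv f (-x))) := by ring
  rw [hA, div_neg]
  ring

lemma iterate_conj (g G : ℝ → ℝ) (hG : ∀ x, G x = -g (-x)) :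
    ∀ n x, G^[n] (-x) = -(g^[n] x) := by
  intro n
  induction n with
  | zero => simp
  | succ n ih =>
    intro x
    rw [Function.iterate_succ_apply, Function.iterate_succ_apply, hG, neg_neg, ih]

lemma deriv_reflectneg (f : ℝ → ℝ) : deriv (fun x => -f (-x)) = fun x => deriv f (-x) := by
  funext x
  rw [show (fun x => -f (-x)) = fun x => -(fun y => f (-y)) x from rfl]
  rw [deriv.fun_neg, deriv_comp_neg, neg_neg]

lemma schwarzian_reflectneg (f : ℝ → ℝ) (x : ℝ) :
    schwarzian (fun y => -f (-y)) x = schwarzian f (-x) := by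
  have h1 : deriv (fun y => -f (-y)) = fun y => deriv f (-y) := deriv_reflectneg f
  have h2 : deriv (deriv (fun y => -f (-y))) = fun y => -deriv (deriv f) (-y) := by
    rw [h1]; exact deriv_reflect _
  have h3 : deriv (deriv (deriv (fun y => -f (-y)))) = fun y => deriv (deriv (deriv f)) (-y) := by
    rw [h2]; exact deriv_reflectneg _
  unfold schwarzian
  rw [h3, h2, h1]
  beta_reduce
  rw [neg_div, neg_sq]

lemma halley_reflectneg (f : ℝ → ℝ) : halley (fun y => -f (-y)) = fun x => -halley f (-x) := by
  funext x
  have h1 : deriv (fun y => -f (-y)) = fun y => deriv f (-y) := deriv_reflectneg f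
  have h2 : deriv (deriv (fun y => -f (-y))) = fun y => -deriv (deriv f) (-y) := by
    rw [h1]; exact deriv_reflect _
  unfold halley
  rw [h2, h1]
  beta_reduce
  ring

noncomputable def Dh (f : ℝ → ℝ) (x : ℝ) : ℝ :=
  deriv f x - deriv (deriv f) x * f x / (2 * deriv f x)

noncomputable def Phi (f : ℝ → ℝ) (x : ℝ) : ℝ := f x / Real.sqrt (deriv f x)

noncomputable def Psi (f : ℝ → ℝ) (x : ℝ) : ℝ := Dh f x / Real.sqrt (deriv f x)

lemma halley_main (f : ℝ → ℝ) (J : Set ℝ) (hJ : IsOpen J) (hJc : Convex ℝ J)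
    (hf : ∀ x ∈ J, ContDiffAt ℝ 3 f x)
    (hf' : ∀ x ∈ J, 0 < deriv f x)
    (α : ℝ) (hα : α ∈ J) (hfα : f α = 0)
    (hS : ∀ x ∈ J, schwarzian f x < 0)
    (x₀ : ℝ) (hx₀ : x₀ ∈ J) (hαx : α ≤ x₀) :
    Tendsto (fun n => (halley f)^[n] x₀) atTop (nhds α) ∧
      Antitone fun n => (halley f)^[n] x₀ := by
  have hOrd : OrdConnected J := hJc.ordConnected
  have hC : ContDiffOn ℝ 3 f J := fun x hx => (hf x hx).contDiffWithinAt
  have hC1 : ContDiffOn ℝ 2 (deriv f) J := hC.deriv_of_isOpen hJ (by norm_num)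
  have hC2 : ContDiffOn ℝ 1 (deriv (deriv f)) J := hC1.deriv_of_isOpen hJ (by norm_num)
  have hd0 : ∀ x ∈ J, HasDerivAt f (deriv f x) x := fun x hx =>
    ((hC.differentiableOn (by norm_num)).differentiableAt (hJ.mem_nhds hx)).hasDerivAt
  have hd1 : ∀ x ∈ J, HasDerivAt (deriv f) (deriv (deriv f) x) x := fun x hx =>
    ((hC1.differentiableOn (by norm_num)).differentiableAt (hJ.mem_nhds hx)).hasDerivAt
  have hd2 : ∀ x ∈ J, HasDerivAt (deriv (deriv f)) (deriv (deriv (deriv f)) x) x := fun x hx =>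
    ((hC2.differentiableOn (by norm_num)).differentiableAt (hJ.mem_nhds hx)).hasDerivAt
  have hspos : ∀ x ∈ J, 0 < Real.sqrt (deriv f x) := fun x hx => Real.sqrt_pos.2 (hf' x hx)
  have hsq : ∀ x ∈ J, Real.sqrt (deriv f x) ^ 2 = deriv f x := fun x hx =>
    Real.sq_sqrt (hf' x hx).le
  have hds : ∀ x ∈ J, HasDerivAt (fun y => Real.sqrt (deriv f y))
      (deriv (deriv f) x / (2 * Real.sqrt (deriv f x))) x := fun x hx =>
    (hd1 x hx).sqrt (hf' x hx).ne'
  have hdPhi : ∀ x ∈ J, HasDerivAt (Phi f) (Psi f x) x := by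
    intro x hx
    have h : HasDerivAt (Phi f)
        ((deriv f x * Real.sqrt (deriv f x) -
          f x * (deriv (deriv f) x / (2 * Real.sqrt (deriv f x)))) / Real.sqrt (deriv f x) ^ 2)
        x := (hd0 x hx).div (hds x hx) (hspos x hx).ne'
    suffices hval : Psi f x =
        (deriv f x * Real.sqrt (deriv f x) -
          f x * (deriv (deriv f) x / (2 * Real.sqrt (deriv f x)))) / Real.sqrt (deriv f x) ^ 2 by
      rw [hval]; exact h
    have h2 := hsq x hx
    have hsx0 : 0 < Real.sqrt (deriv f x) := hspos x hx
    unfold Psi Dh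
    generalize hg : Real.sqrt (deriv f x) = sx at h2 hsx0 ⊢
    rw [← h2]
    field_simp
  have hdPsi : ∀ x ∈ J, HasDerivAt (Psi f) (-(1/2) * schwarzian f x * Phi f x) x := by
    intro x hx
    have hfx := hf' x hx
    have h2f1 : (2 : ℝ) * deriv f x ≠ 0 := mul_ne_zero two_ne_zero hfx.ne'
    have hD : HasDerivAt (Dh f) (deriv (deriv f) x -
        ((deriv (deriv (deriv f)) x * f x + deriv (deriv f) x * deriv f x) * (2 * deriv f x)
          - deriv (deriv f) x * f x * (2 * deriv (deriv f) x)) / (2 * deriv f x) ^ 2) x :=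
      (hd1 x hx).sub (((hd2 x hx).mul (hd0 x hx)).div ((hd1 x hx).const_mul 2) h2f1)
    have h := hD.div (hds x hx) (hspos x hx).ne'
    suffices hval : -(1/2) * schwarzian f x * Phi f x =
        ((deriv (deriv f) x -
          ((deriv (deriv (deriv f)) x * f x + deriv (deriv f) x * deriv f x) * (2 * deriv f x)
            - deriv (deriv f) x * f x * (2 * deriv (deriv f) x)) / (2 * deriv f x) ^ 2) *
            Real.sqrt (deriv f x) -
          Dh f x * (deriv (deriv f) x / (2 * Real.sqrt (deriv f x)))) /
          Real.sqrt (deriv f x) ^ 2 by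
      rw [hval]; exact h
    have h2 := hsq x hx
    have hsx0 : 0 < Real.sqrt (deriv f x) := hspos x hx
    unfold schwarzian Phi Dh
    generalize hg : Real.sqrt (deriv f x) = sx at h2 hsx0 ⊢
    rw [← h2]
    field_simp
    ring
  have hPhi0 : Phi f α = 0 := by unfold Phi; rw [hfα, zero_div]
  have hPsiα : 0 < Psi f α := by
    unfold Psi Dh
    rw [hfα, mul_zero, zero_div, sub_zero]
    exact div_pos (hf' α hα) (hspos α hα)
  have hPsipos : ∀ b ∈ J, α ≤ b → 0 < Psi f b := by
    intro b hb hab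
    by_contra hcon
    push_neg at hcon
    have hIccJ : Icc α b ⊆ J := hOrd.out hα hb
    set S := Icc α b ∩ Psi f ⁻¹' Iic 0 with hSdef
    have hbS : b ∈ S := ⟨⟨hab, le_refl b⟩, hcon⟩
    have hPsiCont : ContinuousOn (Psi f) (Icc α b) := fun x hx =>
      ((hdPsi x (hIccJ hx)).continuousAt).continuousWithinAt
    have hSc : IsClosed S :=
      hPsiCont.preimage_isClosed_of_isClosed isClosed_Icc isClosed_Iic
    have hbdd : BddBelow S := ⟨α, fun x hx => hx.1.1⟩
    have hne : S.Nonempty := ⟨b, hbS⟩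
    have hcS : sInf S ∈ S := hSc.csInf_mem hne hbdd
    set c := sInf S with hcdef
    have hc0 : Psi f c ≤ 0 := hcS.2
    have hαc : α < c := by
      have hle : α ≤ c := le_csInf hne fun x hx => hx.1.1
      rcases eq_or_lt_of_le hle with h | h
      · exact absurd (h ▸ hc0) (not_le.2 hPsiα)
      · exact h
    have hIccc : Icc α c ⊆ J := fun x hx => hIccJ ⟨hx.1, hx.2.trans hcS.1.2⟩
    have hpre : ∀ x ∈ Ico α c, 0 < Psi f x := by
      intro x hx
      by_contra hc2
      push_neg at hc2
      have hxS : x ∈ S := ⟨⟨hx.1, hx.2.le.trans hcS.1.2⟩, hc2⟩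
      exact absurd (csInf_le hbdd hxS) (not_le.2 hx.2)
    have hPhiMono : StrictMonoOn (Phi f) (Icc α c) := by
      apply strictMonoOn_of_deriv_pos (convex_Icc α c)
        (fun x hx => ((hdPhi x (hIccc hx)).continuousAt).continuousWithinAt)
      intro x hx
      rw [interior_Icc] at hx
      rw [(hdPhi x (hIccc (Ioo_subset_Icc_self hx))).deriv]
      exact hpre x ⟨hx.1.le, hx.2⟩
    have hPhiPos : ∀ x ∈ Ioc α c, 0 < Phi f x := by
      intro x hx
      have h := hPhiMono (left_mem_Icc.2 hαc.le) ⟨hx.1.le, hx.2⟩ hx.1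
      rwa [hPhi0] at h
    have hPsiMono : StrictMonoOn (Psi f) (Icc α c) := by
      apply strictMonoOn_of_deriv_pos (convex_Icc α c)
        (fun x hx => ((hdPsi x (hIccc hx)).continuousAt).continuousWithinAt)
      intro x hx
      rw [interior_Icc] at hx
      have hxJ := hIccc (Ioo_subset_Icc_self hx)
      rw [(hdPsi x hxJ).deriv]
      have h1 := hS x hxJ
      have h2 := hPhiPos x ⟨hx.1, hx.2.le⟩
      nlinarith
    have hfin := hPsiMono (left_mem_Icc.2 hαc.le) (right_mem_Icc.2 hαc.le) hαc
    linarith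
  have hPhiMonoI : ∀ b ∈ J, α ≤ b → StrictMonoOn (Phi f) (Icc α b) := by
    intro b hb hab
    have hIccJ : Icc α b ⊆ J := hOrd.out hα hb
    apply strictMonoOn_of_deriv_pos (convex_Icc α b)
      (fun x hx => ((hdPhi x (hIccJ hx)).continuousAt).continuousWithinAt)
    intro x hx
    rw [interior_Icc] at hx
    have hxJ := hIccJ (Ioo_subset_Icc_self hx)
    rw [(hdPhi x hxJ).deriv]
    exact hPsipos x hxJ hx.1.le
  have hPhiPos : ∀ b ∈ J, α < b → 0 < Phi f b := by
    intro b hb hab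
    have h := hPhiMonoI b hb hab.le (left_mem_Icc.2 hab.le) (right_mem_Icc.2 hab.le) hab
    rwa [hPhi0] at h
  have hPsiMonoI : ∀ b ∈ J, α ≤ b → MonotoneOn (Psi f) (Icc α b) := by
    intro b hb hab
    have hIccJ : Icc α b ⊆ J := hOrd.out hα hb
    apply monotoneOn_of_deriv_nonneg (convex_Icc α b)
      (fun x hx => ((hdPsi x (hIccJ hx)).continuousAt).continuousWithinAt)
      (fun x hx => by
        rw [interior_Icc] at hx
        exact ((hdPsi x (hIccJ (Ioo_subset_Icc_self hx))).differentiableAt).differentiableWithinAt)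
    intro x hx
    rw [interior_Icc] at hx
    have hxJ := hIccJ (Ioo_subset_Icc_self hx)
    rw [(hdPsi x hxJ).deriv]
    have h1 := hS x hxJ
    have h2 := hPhiPos x hxJ hx.1
    nlinarith
  have hDpos : ∀ x ∈ J, α ≤ x → 0 < Dh f x := by
    intro x hx hax
    have h1 := hPsipos x hx hax
    have h2 := hspos x hx
    have heq : Dh f x = Psi f x * Real.sqrt (deriv f x) :=
      (div_mul_cancel₀ _ (hspos x hx).ne').symm
    rw [heq]
    exact mul_pos h1 h2
  have hfpos : ∀ x ∈ J, α < x → 0 < f x := by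
    intro x hx hax
    have heq : f x = Phi f x * Real.sqrt (deriv f x) :=
      (div_mul_cancel₀ _ (hspos x hx).ne').symm
    rw [heq]
    exact mul_pos (hPhiPos x hx hax) (hspos x hx)
  have hstep : ∀ x ∈ J, α ≤ x → α ≤ halley f x ∧ halley f x ≤ x := by
    intro x hx hax
    have hhal : halley f x = x - f x / Dh f x := rfl
    rcases eq_or_lt_of_le hax with rfl | hax'
    · rw [hhal, hfα, zero_div, sub_zero]
      exact ⟨le_refl _, le_refl _⟩
    have hDx := hDpos x hx hax
    constructor
    · have hIccJ : Icc α x ⊆ J := hOrd.out hα hx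
      obtain ⟨c, hc, hsl⟩ := exists_hasDerivAt_eq_slope (Phi f) (Psi f) hax'
        (fun y hy => ((hdPhi y (hIccJ hy)).continuousAt).continuousWithinAt)
        (fun y hy => hdPhi y (hIccJ (Ioo_subset_Icc_self hy)))
      rw [hPhi0, sub_zero] at hsl
      have hcx : Psi f c ≤ Psi f x := hPsiMonoI x hx hax'.le ⟨hc.1.le, hc.2.le⟩
        (right_mem_Icc.2 hax'.le) hc.2.le
      have hPsix := hPsipos x hx hax'.le
      have hPhix : Phi f x = Psi f c * (x - α) := by
        rw [hsl]
        exact (div_mul_cancel₀ _ (sub_ne_zero.2 hax'.ne')).symm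
      have hfd : f x / Dh f x = Phi f x / Psi f x :=
        (div_div_div_cancel_right₀ (hspos x hx).ne' (f x) (Dh f x)).symm
      have hkey : Phi f x / Psi f x ≤ x - α := by
        rw [div_le_iff₀ hPsix]
        calc Phi f x = Psi f c * (x - α) := hPhix
          _ ≤ Psi f x * (x - α) := mul_le_mul_of_nonneg_right hcx (by linarith)
          _ = (x - α) * Psi f x := mul_comm _ _
      rw [hhal, hfd]
      linarith
    · rw [hhal]
      have hf0 : 0 ≤ f x := (hfpos x hx hax').le
      have hdiv := div_nonneg hf0 hDx.le
      linarith
  set g := halley f with hg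
  have key : ∀ n : ℕ, α ≤ g^[n] x₀ ∧ g^[n] x₀ ≤ x₀ := by
    intro n
    induction n with
    | zero => exact ⟨hαx, le_refl x₀⟩
    | succ n ih =>
      have haJ : g^[n] x₀ ∈ J := hOrd.out hα hx₀ ⟨ih.1, ih.2⟩
      have hsn := hstep _ haJ ih.1
      rw [Function.iterate_succ_apply']
      exact ⟨hsn.1, hsn.2.trans ih.2⟩
  have hmemJ : ∀ n : ℕ, g^[n] x₀ ∈ J := fun n => hOrd.out hα hx₀ ⟨(key n).1, (key n).2⟩
  have hanti : Antitone fun n => g^[n] x₀ := antitone_nat_of_succ_le fun n => by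
    rw [Function.iterate_succ_apply']
    exact (hstep _ (hmemJ n) (key n).1).2
  have hbdd : BddBelow (range fun n => g^[n] x₀) := ⟨α, by rintro y ⟨n, rfl⟩; exact (key n).1⟩
  have hlim := tendsto_atTop_ciInf hanti hbdd
  set L := ⨅ n, g^[n] x₀ with hL
  have hLα : α ≤ L := le_ciInf fun n => (key n).1
  have hLx : L ≤ x₀ := by
    have h := ciInf_le hbdd 0
    simpa using h
  have hLJ : L ∈ J := hOrd.out hα hx₀ ⟨hLα, hLx⟩
  have hcf : ContinuousAt f L := (hf L hLJ).continuousAt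
  have hcD : ContinuousAt (Dh f) L := by
    have c1 : ContinuousAt (deriv f) L := (hd1 L hLJ).continuousAt
    have c2 : ContinuousAt (deriv (deriv f)) L := (hd2 L hLJ).continuousAt
    exact c1.sub ((c2.mul hcf).div (continuousAt_const.mul c1)
      (mul_ne_zero two_ne_zero (hf' L hLJ).ne'))
  have hDL : Dh f L ≠ 0 := (hDpos L hLJ hLα).ne'
  have hcg : ContinuousAt g L := continuousAt_id.sub (hcf.div hcD hDL)
  have h1 : Tendsto (fun n => g^[n + 1] x₀) atTop (nhds L) :=
    hlim.comp (tendsto_add_atTop_nat 1)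
  have h2 : Tendsto (fun n => g (g^[n] x₀)) atTop (nhds (g L)) := hcg.tendsto.comp hlim
  have hfix : g L = L := by
    have heq : (fun n => g (g^[n] x₀)) = fun n => g^[n + 1] x₀ :=
      funext fun n => (Function.iterate_succ_apply' g n x₀).symm
    rw [heq] at h2
    exact tendsto_nhds_unique h2 h1
  have hfL : f L = 0 := by
    have hdiv : f L / Dh f L = 0 := by
      have h3 : L - f L / Dh f L = L := hfix
      linarith
    exact (div_eq_zero_iff.1 hdiv).resolve_right hDL
  have hLeq : L = α := by
    rcases eq_or_lt_of_le hLα with h | h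
    · exact h.symm
    · exact absurd hfL (hfpos L hLJ h).ne'
  exact ⟨hLeq ▸ hlim, hanti⟩

lemma halley_main₂ (f : ℝ → ℝ) (J : Set ℝ) (hJ : IsOpen J) (hJc : Convex ℝ J)
    (hf : ∀ x ∈ J, ContDiffAt ℝ 3 f x)
    (hf' : ∀ x ∈ J, 0 < deriv f x)
    (α : ℝ) (hα : α ∈ J) (hfα : f α = 0)
    (hS : ∀ x ∈ J, schwarzian f x < 0)
    (x₀ : ℝ) (hx₀ : x₀ ∈ J) :
    Tendsto (fun n => (halley f)^[n] x₀) atTop (nhds α) ∧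
      (Monotone (fun n => (halley f)^[n] x₀) ∨ Antitone fun n => (halley f)^[n] x₀) := by
  rcases le_total α x₀ with hle | hle
  · obtain ⟨h1, h2⟩ := halley_main f J hJ hJc hf hf' α hα hfα hS x₀ hx₀ hle
    exact ⟨h1, Or.inr h2⟩
  · have hJ' : IsOpen (Neg.neg ⁻¹' J) := hJ.preimage continuous_neg
    have hJc' : Convex ℝ (Neg.neg ⁻¹' J) := by
      intro x hx y hy a b ha hb hab
      simp only [mem_preimage, smul_eq_mul] at *
      have h := hJc hx hy ha hb hab
      simp only [smul_eq_mul] at h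
      rw [show -(a * x + b * y) = a * -x + b * -y by ring]
      exact h
    have hfG : ∀ x ∈ Neg.neg ⁻¹' J, ContDiffAt ℝ 3 (fun y => -f (-y)) x := fun x hx =>
      (ContDiffAt.comp x (hf (-x) hx) contDiff_neg.contDiffAt).neg
    have hfG' : ∀ x ∈ Neg.neg ⁻¹' J, 0 < deriv (fun y => -f (-y)) x := fun x hx => by
      rw [deriv_reflectneg f]
      exact hf' (-x) hx
    have hSG : ∀ x ∈ Neg.neg ⁻¹' J, schwarzian (fun y => -f (-y)) x < 0 := fun x hx => by
      rw [schwarzian_reflectneg f x]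
      exact hS (-x) hx
    obtain ⟨hT, hA⟩ := halley_main (fun y => -f (-y)) (Neg.neg ⁻¹' J) hJ' hJc' hfG hfG'
      (-α) (by simpa using hα) (by simpa using hfα) hSG (-x₀) (by simpa using hx₀)
      (neg_le_neg hle)
    have hc : ∀ x, halley (fun y => -f (-y)) x = -halley f (-x) := fun x =>
      congrFun (halley_reflectneg f) x
    have hit : ∀ n : ℕ, (halley (fun y => -f (-y)))^[n] (-x₀) = -((halley f)^[n] x₀) :=
      fun n => iterate_conj (halley f) _ hc n x₀
    simp only [hit] at hT hA
    constructor
    · have h := hT.neg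
      simpa using h
    · left
      intro a b hab
      have h := hA hab
      simpa using h

/-- If on an open interval `J` one has `f' ≠ 0`, `f` is `C³` (so `f'''` continuous),
`{f,x} < 0` on `J`, and `f(α) = 0` with `α ∈ J`, then Halley's iteration converges
monotonically to `α` for any starting value `x₀ ∈ J`. -/
theorem stmt7 (f : ℝ → ℝ) (J : Set ℝ) (hJ : IsOpen J) (hJc : Convex ℝ J)
    (hf : ∀ x ∈ J, ContDiffAt ℝ 3 f x)
    (hf' : ∀ x ∈ J, deriv f x ≠ 0)
    (α : ℝ) (hα : α ∈ J) (hfα : f α = 0)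
    (hS : ∀ x ∈ J, schwarzian f x < 0) :
    ∀ x₀ ∈ J,
      Filter.Tendsto (fun n => (halley f)^[n] x₀) Filter.atTop (nhds α) ∧
      (Monotone (fun n => (halley f)^[n] x₀) ∨ Antitone (fun n => (halley f)^[n] x₀)) := by
  intro x₀ hx₀
  have hC : ContDiffOn ℝ 3 f J := fun x hx => (hf x hx).contDiffWithinAt
  have hC1 : ContDiffOn ℝ 2 (deriv f) J := hC.deriv_of_isOpen hJ (by norm_num)
  have hcont : ContinuousOn (deriv f) J := hC1.continuousOn
  have hsign : (∀ x ∈ J, 0 < deriv f x) ∨ (∀ x ∈ J, deriv f x < 0) := by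
    rcases lt_or_gt_of_ne (hf' α hα) with h | h
    · right
      intro x hx
      by_contra hc
      push_neg at hc
      have hx0 : 0 < deriv f x := lt_of_le_of_ne hc (Ne.symm (hf' x hx))
      have hsub : uIcc α x ⊆ J := hJc.ordConnected.uIcc_subset hα hx
      have h0 : (0 : ℝ) ∈ deriv f '' uIcc α x :=
        intermediate_value_uIcc (hcont.mono hsub) (by
          rw [Set.mem_uIcc]
          exact Or.inl ⟨h.le, hx0.le⟩)
      obtain ⟨y, hy, hy0⟩ := h0
      exact hf' y (hsub hy) hy0
    · left
      intro x hx
      by_contra hc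
      push_neg at hc
      have hx0 : deriv f x < 0 := lt_of_le_of_ne hc (hf' x hx)
      have hsub : uIcc α x ⊆ J := hJc.ordConnected.uIcc_subset hα hx
      have h0 : (0 : ℝ) ∈ deriv f '' uIcc α x :=
        intermediate_value_uIcc (hcont.mono hsub) (by
          rw [Set.mem_uIcc]
          exact Or.inr ⟨hx0.le, h.le⟩)
      obtain ⟨y, hy, hy0⟩ := h0
      exact hf' y (hsub hy) hy0
  rcases hsign with hpos | hneg
  · exact halley_main₂ f J hJ hJc hf hpos α hα hfα hS x₀ hx₀
  · have h := halley_main₂ (fun x => -f x) J hJ hJc (fun x hx => (hf x hx).neg)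
      (fun x hx => by
        rw [deriv_neg_fun f]
        simpa using hneg x hx)
      α hα (by simpa using hfα)
      (fun x hx => by rw [schwarzian_neg f]; exact hS x hx) x₀ hx₀
    rwa [halley_neg] at h
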